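/- Let S_W, S_B be real symmetric d×d matrices with eigenvalues ν_1 ≥ ... ≥ ν_d and μ_1 ≥ ... ≥ μ_d respectively, and let λ_1(M) ≥ ... ≥ λ_d(M) be the eigenvalues of M = exp(−S_W/2)·exp(S_B)·exp(−S_W/2). Then for each i, exp(μ_d − ν_{d−i+1}) ≤ λ_i(M) ≤ exp(μ_1 − ν_{d−i+1}). -/

import Mathlib

open Matrix NormedSpace
open scoped RealInnerProductSpace
noncomputable section
namespace EigAux
variable {d : ℕ}

abbrev E (d : ℕ) := EuclideanSpace ℝ (Fin d)

/-- mulVec as a linear map on Euclidean space -/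
def mvLin (A : Matrix (Fin d) (Fin d) ℝ) : E d →ₗ[ℝ] E d :=
  (WithLp.linearEquiv 2 ℝ (Fin d → ℝ)).symm.toLinearMap ∘ₗ
    (Matrix.mulVecLin A) ∘ₗ (WithLp.linearEquiv 2 ℝ (Fin d → ℝ)).toLinearMap

lemma mvLin_apply (A : Matrix (Fin d) (Fin d) ℝ) (x : E d) : mvLin A x = A *ᵥ x := rfl

lemma mvLin_eig {A : Matrix (Fin d) (Fin d) ℝ} {b : E d} {w : ℝ}
    (h : A *ᵥ ⇑b = w • ⇑b) : mvLin A b = w • b := WithLp.ofLp_injective 2 h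


lemma inner_map_eq_sum {T : E d →ₗ[ℝ] E d} {b : OrthonormalBasis (Fin d) ℝ (E d)}
    {w : Fin d → ℝ} (hT : ∀ j, T (b j) = w j • b j) (x : E d) :
    ⟪x, T x⟫ = ∑ j, w j * (b.repr x j)^2 := by
  have hTx : T x = ∑ j, (w j * b.repr x j) • b j := by
    conv_lhs => rw [← b.sum_repr x]
    rw [map_sum]
    refine Finset.sum_congr rfl fun j _ => ?_
    rw [_root_.map_smul, hT, smul_smul, mul_comm]
  rw [hTx, inner_sum]
  refine Finset.sum_congr rfl fun j _ => ?_
  rw [real_inner_smul_right, real_inner_comm, ← OrthonormalBasis.repr_apply_apply]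
  ring

lemma inner_self_eq_sum {b : OrthonormalBasis (Fin d) ℝ (E d)} (x : E d) :
    ⟪x, x⟫ = ∑ j, (b.repr x j)^2 := by
  have := inner_map_eq_sum (T := LinearMap.id) (b := b) (w := fun _ => 1)
    (fun j => by simp) x
  simpa using this

lemma repr_eq_zero_of_mem_span {b : OrthonormalBasis (Fin d) ℝ (E d)} {s : Finset (Fin d)}
    {x : E d} (hx : x ∈ Submodule.span ℝ (b '' ↑s)) {j : Fin d} (hj : j ∉ s) :
    b.repr x j = 0 := by
  rw [OrthonormalBasis.repr_apply_apply]
  induction hx using Submodule.span_induction with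
  | mem y hy =>
      obtain ⟨k, hk, rfl⟩ := hy
      exact b.orthonormal.2 (fun h => hj (h ▸ hk)) 
  | zero => simp
  | add y z _ _ hy hz => rw [inner_add_right, hy, hz, add_zero]
  | smul c y _ hy => rw [inner_smul_right, hy, mul_zero]

lemma finrank_span_orthonormal {b : OrthonormalBasis (Fin d) ℝ (E d)} (s : Finset (Fin d)) :
    Module.finrank ℝ (Submodule.span ℝ (b '' ↑s)) = s.card := by
  rw [Set.image_eq_range]
  have li : LinearIndependent ℝ (⇑b ∘ (Subtype.val : ↥(↑s : Set (Fin d)) → Fin d)) :=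
    b.orthonormal.linearIndependent.comp _ Subtype.val_injective
  have hr : (Set.range fun x : ↥(↑s : Set (Fin d)) => b ↑x)
      = Set.range (⇑b ∘ (Subtype.val : ↥(↑s : Set (Fin d)) → Fin d)) := rfl
  rw [hr, finrank_span_eq_card li]
  simp

lemma weyl_mono {T S : E d →ₗ[ℝ] E d} {b c : OrthonormalBasis (Fin d) ℝ (E d)}
    {w t : Fin d → ℝ} (hT : ∀ j, T (b j) = w j • b j) (hS : ∀ j, S (c j) = t j • c j)
    (hw : Antitone w) (ht : Antitone t)
    (h : ∀ x : E d, ⟪x, T x⟫ ≤ ⟪x, S x⟫) (i : Fin d) : w i ≤ t i := by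
  set V := Submodule.span ℝ (b '' ↑(Finset.Iic i)) with hVdef
  set W := Submodule.span ℝ (c '' ↑(Finset.Ici i)) with hWdef
  have hV : Module.finrank ℝ V = (i : ℕ) + 1 := by
    rw [hVdef, finrank_span_orthonormal, Fin.card_Iic]
  have hWr : Module.finrank ℝ W = d - (i : ℕ) := by
    rw [hWdef, finrank_span_orthonormal, Fin.card_Ici]
  have hpos : 0 < Module.finrank ℝ ↥(V ⊓ W) := by
    have h1 := Submodule.finrank_sup_add_finrank_inf_eq V W
    have h2 : Module.finrank ℝ ↥(V ⊔ W) ≤ d :=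
      le_trans (Submodule.finrank_le _) (by simp [finrank_euclideanSpace])
    have := i.isLt
    omega
  have : Nontrivial ↥(V ⊓ W) := Module.nontrivial_of_finrank_pos hpos
  obtain ⟨⟨x, hxVW⟩, hx0'⟩ := exists_ne (0 : ↥(V ⊓ W))
  have hx0 : x ≠ 0 := by
    intro hx; exact hx0' (Subtype.ext hx)
  obtain ⟨hxV, hxW⟩ := Submodule.mem_inf.mp hxVW
  have hxx : (0:ℝ) < ⟪x, x⟫ := by
    rw [real_inner_self_eq_norm_sq]
    have : ‖x‖ ≠ 0 := norm_ne_zero_iff.mpr hx0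
    positivity
  have h1 : w i * ⟪x, x⟫ ≤ ⟪x, T x⟫ := by
    rw [inner_map_eq_sum hT, inner_self_eq_sum (b := b), Finset.mul_sum]
    refine Finset.sum_le_sum fun j _ => ?_
    by_cases hj : j ≤ i
    · exact mul_le_mul_of_nonneg_right (hw hj) (sq_nonneg _)
    · rw [repr_eq_zero_of_mem_span hxV (by simpa using hj)]
      simp
  have h2 : ⟪x, S x⟫ ≤ t i * ⟪x, x⟫ := by
    rw [inner_map_eq_sum hS, inner_self_eq_sum (b := c), Finset.mul_sum]
    refine Finset.sum_le_sum fun j _ => ?_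
    by_cases hj : i ≤ j
    · exact mul_le_mul_of_nonneg_right (ht hj) (sq_nonneg _)
    · rw [repr_eq_zero_of_mem_span hxW (by simpa using hj)]
      simp
  have := le_trans h1 (le_trans (h x) h2)
  exact le_of_mul_le_mul_right (by linarith [this]) hxx


lemma exp_mulVec {A : Matrix (Fin d) (Fin d) ℝ} {v : Fin d → ℝ} {c : ℝ}
    (hv : A *ᵥ v = c • v) : NormedSpace.exp A *ᵥ v = Real.exp c • v := by
  letI : SeminormedRing (Matrix (Fin d) (Fin d) ℝ) := Matrix.linftyOpSemiNormedRing
  letI : NormedRing (Matrix (Fin d) (Fin d) ℝ) := Matrix.linftyOpNormedRing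
  letI : NormedAlgebra ℝ (Matrix (Fin d) (Fin d) ℝ) := Matrix.linftyOpNormedAlgebra
  have hpow : ∀ n : ℕ, A ^ n *ᵥ v = c ^ n • v := by
    intro n
    induction n with
    | zero => simp
    | succ n ih =>
        rw [pow_succ, pow_succ, ← mulVec_mulVec, hv, mulVec_smul, ih, smul_smul, mul_comm]
  let L0 : Matrix (Fin d) (Fin d) ℝ →ₗ[ℝ] (Fin d → ℝ) :=
    { toFun := fun B => B *ᵥ v
      map_add' := fun B C => add_mulVec B C v
      map_smul' := fun r B => smul_mulVec r B v }
  let L : Matrix (Fin d) (Fin d) ℝ →L[ℝ] (Fin d → ℝ) := LinearMap.toContinuousLinearMap L0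
  have h1 : NormedSpace.exp A *ᵥ v = L (∑' n : ℕ, ((Nat.factorial n : ℝ))⁻¹ • A ^ n) := by
    rw [NormedSpace.exp_eq_tsum ℝ]
    rfl
  rw [h1, L.map_tsum (NormedSpace.expSeries_summable' A)]
  have h2 : ∀ n : ℕ, L (((Nat.factorial n : ℝ))⁻¹ • A ^ n) = (((Nat.factorial n : ℝ))⁻¹ * c ^ n) • v := by
    intro n
    have : L (((Nat.factorial n : ℝ))⁻¹ • A ^ n) = ((Nat.factorial n : ℝ))⁻¹ • (A ^ n *ᵥ v) := by
      rw [_root_.map_smul]; rfl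
    rw [this, hpow, smul_smul]
  simp_rw [h2]
  have hs : Summable fun n : ℕ => ((Nat.factorial n : ℝ))⁻¹ * c ^ n := by
    simpa [smul_eq_mul] using NormedSpace.expSeries_summable' (𝕂 := ℝ) c
  rw [hs.tsum_smul_const]
  congr 1
  rw [Real.exp_eq_exp_ℝ, NormedSpace.exp_eq_tsum ℝ]
  simp [smul_eq_mul]


lemma inner_map_le {Tm : E d →ₗ[ℝ] E d} {b : OrthonormalBasis (Fin d) ℝ (E d)} {w : Fin d → ℝ}
    (hT : ∀ j, Tm (b j) = w j • b j) {C : ℝ} (hC : ∀ j, w j ≤ C) (x : E d) :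
    ⟪x, Tm x⟫ ≤ C * ⟪x, x⟫ := by
  rw [inner_map_eq_sum hT, inner_self_eq_sum (b := b), Finset.mul_sum]
  exact Finset.sum_le_sum fun j _ => mul_le_mul_of_nonneg_right (hC j) (sq_nonneg _)

lemma inner_map_ge {Tm : E d →ₗ[ℝ] E d} {b : OrthonormalBasis (Fin d) ℝ (E d)} {w : Fin d → ℝ}
    (hT : ∀ j, Tm (b j) = w j • b j) {C : ℝ} (hC : ∀ j, C ≤ w j) (x : E d) :
    C * ⟪x, x⟫ ≤ ⟪x, Tm x⟫ := by
  rw [inner_map_eq_sum hT, inner_self_eq_sum (b := b), Finset.mul_sum]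
  exact Finset.sum_le_sum fun j _ => mul_le_mul_of_nonneg_right (hC j) (sq_nonneg _)

lemma inner_eq_dot (x y : E d) : ⟪x, y⟫ = dotProduct x y := by
  simp [PiLp.inner_apply, dotProduct, RCLike.inner_apply, mul_comm]

lemma dot_sym_shift {A : Matrix (Fin d) (Fin d) ℝ} (hA : Aᵀ = A) (x z : Fin d → ℝ) :
    x ⬝ᵥ (A *ᵥ z) = (A *ᵥ x) ⬝ᵥ z := by
  rw [dotProduct_mulVec, ← mulVec_transpose, hA]

end EigAux
open EigAux

/-- Eigenvalue bounds: with `ν`, `μ`, `lam` the decreasingly-ordered eigenvalues of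
`S_W`, `S_B` and `M = exp(−S_W/2)·exp(S_B)·exp(−S_W/2)` respectively, one has
`exp(μ_d − ν_{d−i+1}) ≤ λ_i(M) ≤ exp(μ_1 − ν_{d−i+1})`.  (In 0-based indexing the
index `d−i+1` is `i.rev`.) -/
theorem eigenvalue_bounds_two {d : ℕ} (SW SB : Matrix (Fin d) (Fin d) ℝ)
    (hW : SW.IsHermitian) (hB : SB.IsHermitian)
    (hM : (NormedSpace.exp (-((1 / 2 : ℝ) • SW)) * NormedSpace.exp SB *
        NormedSpace.exp (-((1 / 2 : ℝ) • SW))).IsHermitian)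
    (ν μ lam : Fin d → ℝ)
    (hν : Antitone ν) (hμ : Antitone μ) (hlam : Antitone lam)
    (hνe : ∃ σ : Equiv.Perm (Fin d), ν = hW.eigenvalues ∘ σ)
    (hμe : ∃ σ : Equiv.Perm (Fin d), μ = hB.eigenvalues ∘ σ)
    (hlame : ∃ σ : Equiv.Perm (Fin d), lam = hM.eigenvalues ∘ σ)
    (i : Fin d) :
    Real.exp (μ ⟨d - 1, Nat.sub_lt i.pos Nat.one_pos⟩ - ν i.rev) ≤ lam i ∧
      lam i ≤ Real.exp (μ ⟨0, i.pos⟩ - ν i.rev) := by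
  obtain ⟨σν, hνe⟩ := hνe
  obtain ⟨σμ, hμe⟩ := hμe
  obtain ⟨σM, hlame⟩ := hlame
  set i0 : Fin d := ⟨0, i.pos⟩ with hi0
  set i1 : Fin d := ⟨d - 1, Nat.sub_lt i.pos Nat.one_pos⟩ with hi1
  have hSWt : SWᵀ = SW := by
    rw [← Matrix.conjTranspose_eq_transpose_of_trivial]; exact hW
  have hXt : (-((1 / 2 : ℝ) • SW))ᵀ = -((1 / 2 : ℝ) • SW) := by
    rw [Matrix.transpose_neg, Matrix.transpose_smul, hSWt]
  have hE2t : (NormedSpace.exp (-((1 / 2 : ℝ) • SW)))ᵀ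
      = NormedSpace.exp (-((1 / 2 : ℝ) • SW)) := by
    rw [← Matrix.exp_transpose, hXt]
  set E₂ := NormedSpace.exp (-((1 / 2 : ℝ) • SW)) with hE2def
  set Mm := E₂ * NormedSpace.exp SB * E₂ with hMdef
  have hEE : NormedSpace.exp (-SW) = E₂ * E₂ := by
    rw [hE2def, ← Matrix.exp_add_of_commute _ _ (Commute.refl _)]
    congr 1
    rw [← neg_add, ← add_smul]; norm_num
  have hμ0 : ∀ j, hB.eigenvalues j ≤ μ i0 := by
    intro j
    have h : hB.eigenvalues j = μ (σμ.symm j) := by rw [hμe]; simp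
    rw [h]
    exact hμ (by simp [Fin.le_def, hi0])
  have hμ1 : ∀ j, μ i1 ≤ hB.eigenvalues j := by
    intro j
    have h : hB.eigenvalues j = μ (σμ.symm j) := by rw [hμe]; simp
    rw [h]
    refine hμ ?_
    have := (σμ.symm j).isLt
    simp only [Fin.le_def, hi1]
    omega
  have hexpB : ∀ j, mvLin (NormedSpace.exp SB) (hB.eigenvectorBasis j)
      = Real.exp (hB.eigenvalues j) • hB.eigenvectorBasis j :=
    fun j => mvLin_eig (exp_mulVec (hB.mulVec_eigenvectorBasis j))
  set bM : OrthonormalBasis (Fin d) ℝ (EigAux.E d) := hM.eigenvectorBasis.reindex σM.symm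
    with hbMdef
  have hbM : ∀ j, mvLin Mm (bM j) = lam j • bM j := by
    intro j
    have h1 : bM j = hM.eigenvectorBasis (σM j) := by
      rw [hbMdef, OrthonormalBasis.reindex_apply]; simp
    have h2 : lam j = hM.eigenvalues (σM j) := by rw [hlame]; rfl
    rw [h1, h2]
    exact mvLin_eig (hM.mulVec_eigenvectorBasis (σM j))
  set e : Equiv.Perm (Fin d) := Fin.revPerm.trans σν with hedef
  set bW : OrthonormalBasis (Fin d) ℝ (EigAux.E d) := hW.eigenvectorBasis.reindex e.symm
    with hbWdef
  have hbWj : ∀ j : Fin d, bW j = hW.eigenvectorBasis (σν j.rev) := by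
    intro j; rw [hbWdef, OrthonormalBasis.reindex_apply]; simp [hedef]
  have hνrev : ∀ j : Fin d, ν j.rev = hW.eigenvalues (σν j.rev) := by
    intro j; rw [hνe]; rfl
  have hexpW : ∀ j : Fin d,
      mvLin (NormedSpace.exp (-SW)) (bW j) = Real.exp (-ν j.rev) • bW j := by
    intro j
    rw [hbWj, hνrev]
    refine mvLin_eig (exp_mulVec ?_)
    rw [Matrix.neg_mulVec, hW.mulVec_eigenvectorBasis, neg_smul]
  -- comparison matrices
  set CU := Real.exp (μ i0) • NormedSpace.exp (-SW) with hCUdef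
  set CL := Real.exp (μ i1) • NormedSpace.exp (-SW) with hCLdef
  set tU : Fin d → ℝ := fun j => Real.exp (μ i0 - ν j.rev) with htUdef
  set tL : Fin d → ℝ := fun j => Real.exp (μ i1 - ν j.rev) with htLdef
  have hsmul : ∀ (cc : ℝ) (x : EigAux.E d),
      mvLin (cc • NormedSpace.exp (-SW)) x = cc • mvLin (NormedSpace.exp (-SW)) x :=
    fun cc x => WithLp.ofLp_injective 2 (Matrix.smul_mulVec cc (NormedSpace.exp (-SW)) x)
  have hbCU : ∀ j, mvLin CU (bW j) = tU j • bW j := by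
    intro j
    rw [hCUdef, hsmul, hexpW, smul_smul, ← Real.exp_add, ← sub_eq_add_neg]
  have hbCL : ∀ j, mvLin CL (bW j) = tL j • bW j := by
    intro j
    rw [hCLdef, hsmul, hexpW, smul_smul, ← Real.exp_add, ← sub_eq_add_neg]
  have htUanti : Antitone tU := by
    intro j k hjk
    exact Real.exp_le_exp.mpr (sub_le_sub_left (hν (Fin.rev_le_rev.mpr hjk)) _)
  have htLanti : Antitone tL := by
    intro j k hjk
    exact Real.exp_le_exp.mpr (sub_le_sub_left (hν (Fin.rev_le_rev.mpr hjk)) _)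
  -- quadratic form identities
  have hQM : ∀ x : EigAux.E d,
      ⟪x, mvLin Mm x⟫ = ⟪mvLin E₂ x, mvLin (NormedSpace.exp SB) (mvLin E₂ x)⟫ := by
    intro x
    rw [inner_eq_dot, inner_eq_dot, mvLin_apply, mvLin_apply, hMdef]
    rw [← Matrix.mulVec_mulVec, ← Matrix.mulVec_mulVec, dot_sym_shift hE2t]
    rfl
  have hQC : ∀ (cc : ℝ) (x : EigAux.E d),
      ⟪x, mvLin (cc • NormedSpace.exp (-SW)) x⟫
        = cc * ⟪mvLin E₂ x, mvLin E₂ x⟫ := by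
    intro cc x
    rw [hsmul, inner_smul_right, inner_eq_dot, inner_eq_dot, mvLin_apply, mvLin_apply, hEE]
    rw [← Matrix.mulVec_mulVec, dot_sym_shift hE2t]
  have hcompU : ∀ x : EigAux.E d, ⟪x, mvLin Mm x⟫ ≤ ⟪x, mvLin CU x⟫ := by
    intro x
    have key := inner_map_le hexpB (fun j => Real.exp_le_exp.mpr (hμ0 j)) (mvLin E₂ x)
    rw [hQM, hCUdef, hQC]
    exact key
  have hcompL : ∀ x : EigAux.E d, ⟪x, mvLin CL x⟫ ≤ ⟪x, mvLin Mm x⟫ := by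
    intro x
    have key := inner_map_ge hexpB (fun j => Real.exp_le_exp.mpr (hμ1 j)) (mvLin E₂ x)
    rw [hQM, hCLdef, hQC]
    exact key
  constructor
  · exact weyl_mono hbCL hbM htLanti hlam hcompL i
  · exact weyl_mono hbM hbCU hlam htUanti hcompU i
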